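/- arXiv:2006.00267 — 2 statements merged into one kernel-verified Lean document; each statement's English description precedes it below -/
import Mathlib

section
/- Let (Ω, F, ℙ) be a probability space, X : Ω → ℝ^p and A : Ω → ℝ random variables, with σ(X) and σ(X, A) the sub-σ-algebras generated by X and by the pair (X, A). Let Y : Ω → ℝ be integrable with E[Y | σ(X, A)] = M₀ + G₀ almost surely, where M₀ is σ(X)-measurable and integrable, and G₀ is σ(X, A)-measurable with G₀(ω) ∈ (0, 1) almost surely. Let G : Ω → ℝ be bounded, σ(X, A)-measurable, with M₀·G integrable and E[M₀ · G] = 0. Then E[Y·G − log(1 + exp(G))] ≤ E[G₀·log(G₀) + (1 − G₀)·log(1 − G₀)], and equality holds if and only if G = log(G₀ / (1 − G₀)) almost surely. -/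
open MeasureTheory

/-- Pointwise key lemma: for `c ∈ (0,1)`, `s ↦ c·s − log(1+eˢ)` is maximized exactly at
`s = log(c/(1−c))` with maximum value `c log c + (1−c) log(1−c)`. -/
lemma logit_key {c : ℝ} (hc0 : 0 < c) (hc1 : c < 1) (s : ℝ) :
    c * s - Real.log (1 + Real.exp s) ≤ c * Real.log c + (1 - c) * Real.log (1 - c) ∧
    (c * s - Real.log (1 + Real.exp s) = c * Real.log c + (1 - c) * Real.log (1 - c) ↔
      s = Real.log (c / (1 - c))) := by
  have hc1' : 0 < 1 - c := by linarith
  have hE : 0 < Real.exp s := Real.exp_pos s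
  have h1E : 0 < 1 + Real.exp s := by linarith
  set d : ℝ := Real.exp s / (1 + Real.exp s) with hd
  have hd0 : 0 < d := div_pos hE h1E
  have hd1 : d < 1 := by rw [hd, div_lt_one h1E]; linarith
  have hd1' : 0 < 1 - d := by linarith
  have h1md : 1 - d = 1 / (1 + Real.exp s) := by rw [hd]; field_simp; ring
  have hlogd : Real.log d = s - Real.log (1 + Real.exp s) := by
    rw [hd, Real.log_div hE.ne' h1E.ne', Real.log_exp]
  have hlog1md : Real.log (1 - d) = - Real.log (1 + Real.exp s) := by
    rw [h1md, Real.log_div one_ne_zero h1E.ne', Real.log_one]; ring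
  have hrepr : c * s - Real.log (1 + Real.exp s)
      = c * Real.log d + (1 - c) * Real.log (1 - d) := by
    rw [hlogd, hlog1md]; ring
  have hs_eq : s = Real.log (d / (1 - d)) := by
    rw [Real.log_div hd0.ne' hd1'.ne', hlogd, hlog1md]; ring
  have hA : c * Real.log (d / c) ≤ c * (d / c - 1) :=
    mul_le_mul_of_nonneg_left (Real.log_le_sub_one_of_pos (div_pos hd0 hc0)) hc0.le
  have hB : (1 - c) * Real.log ((1 - d) / (1 - c)) ≤ (1 - c) * ((1 - d) / (1 - c) - 1) :=
    mul_le_mul_of_nonneg_left (Real.log_le_sub_one_of_pos (div_pos hd1' hc1')) hc1'.le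
  have hsum : c * (d / c - 1) + (1 - c) * ((1 - d) / (1 - c) - 1) = 0 := by
    field_simp; ring
  have hexpand : c * Real.log (d / c) + (1 - c) * Real.log ((1 - d) / (1 - c))
      = (c * Real.log d + (1 - c) * Real.log (1 - d))
        - (c * Real.log c + (1 - c) * Real.log (1 - c)) := by
    rw [Real.log_div hd0.ne' hc0.ne', Real.log_div hd1'.ne' hc1'.ne']; ring
  have hineq : c * Real.log d + (1 - c) * Real.log (1 - d)
      ≤ c * Real.log c + (1 - c) * Real.log (1 - c) := by linarith
  have hstrict : d ≠ c → c * Real.log d + (1 - c) * Real.log (1 - d)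
      < c * Real.log c + (1 - c) * Real.log (1 - c) := by
    intro hne
    have hdc : d / c ≠ 1 := by
      rw [Ne, div_eq_one_iff_eq hc0.ne']; exact hne
    have hAs : c * Real.log (d / c) < c * (d / c - 1) :=
      mul_lt_mul_of_pos_left
        (Real.log_lt_sub_one_of_pos (div_pos hd0 hc0) hdc) hc0
    linarith
  constructor
  · rw [hrepr]; exact hineq
  constructor
  · intro heq
    rw [hrepr] at heq
    have hdc : d = c := by
      by_contra hne
      exact absurd heq (ne_of_lt (hstrict hne))
    rw [hs_eq, hdc]
  · intro hs
    have hexp : Real.exp s = c / (1 - c) := by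
      rw [hs, Real.exp_log (div_pos hc0 hc1')]
    have hdc : d = c := by
      rw [hd, hexp]; field_simp; ring
    rw [hrepr, hdc]

/-- Bernoulli instance of Proposition 1: if `E[Y | σ(X,A)] = M₀ + G₀` a.s. with `M₀` a
`σ(X)`-measurable integrable main effect and `G₀` a `σ(X,A)`-measurable component valued in
`(0,1)` a.s., then for any bounded `σ(X,A)`-measurable candidate `G` with `E[M₀·G] = 0`,
`E[Y·G − log(1 + exp G)] ≤ E[G₀·log G₀ + (1 − G₀)·log(1 − G₀)]`, with equality iff
`G = log(G₀/(1 − G₀))` almost surely. -/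
theorem stmt10 {Ω : Type*} [MeasurableSpace Ω] (ℙ : Measure Ω) [IsProbabilityMeasure ℙ]
    {p : ℕ} (X : Ω → (Fin p → ℝ)) (A : Ω → ℝ)
    (hX : Measurable X) (hA : Measurable A)
    (Y M₀ G₀ : Ω → ℝ)
    (hY : Integrable Y ℙ)
    (hcond : ℙ[Y | MeasurableSpace.comap (fun ω => (X ω, A ω)) inferInstance]
      =ᵐ[ℙ] fun ω => M₀ ω + G₀ ω)
    (hM₀meas : Measurable[MeasurableSpace.comap X inferInstance] M₀)
    (hM₀ : Integrable M₀ ℙ)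
    (hG₀meas : Measurable[MeasurableSpace.comap (fun ω => (X ω, A ω)) inferInstance] G₀)
    (hG₀range : ∀ᵐ ω ∂ℙ, G₀ ω ∈ Set.Ioo (0 : ℝ) 1)
    (G : Ω → ℝ)
    (hGbdd : ∃ C, ∀ ω, |G ω| ≤ C)
    (hGmeas : Measurable[MeasurableSpace.comap (fun ω => (X ω, A ω)) inferInstance] G)
    (hMG : Integrable (fun ω => M₀ ω * G ω) ℙ)
    (hMGzero : ∫ ω, M₀ ω * G ω ∂ℙ = 0) :
    ∫ ω, (Y ω * G ω - Real.log (1 + Real.exp (G ω))) ∂ℙ ≤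
      ∫ ω, (G₀ ω * Real.log (G₀ ω) + (1 - G₀ ω) * Real.log (1 - G₀ ω)) ∂ℙ ∧
    (∫ ω, (Y ω * G ω - Real.log (1 + Real.exp (G ω))) ∂ℙ =
        ∫ ω, (G₀ ω * Real.log (G₀ ω) + (1 - G₀ ω) * Real.log (1 - G₀ ω)) ∂ℙ ↔
      G =ᵐ[ℙ] fun ω => Real.log (G₀ ω / (1 - G₀ ω))) := by
  obtain ⟨C, hC⟩ := hGbdd
  have hmle := (hX.prodMk hA).comap_le
  have hGm : Measurable G := hGmeas.mono hmle le_rfl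
  have hG₀m : Measurable G₀ := hG₀meas.mono hmle le_rfl
  -- basic integrabilities
  have hGnorm : ∀ ω, ‖G ω‖ ≤ C := fun ω => by simpa using hC ω
  have hGint : Integrable G ℙ :=
    Integrable.mono' (integrable_const C) hGm.aestronglyMeasurable
      (Filter.Eventually.of_forall hGnorm)
  have hG₀bd : ∀ᵐ ω ∂ℙ, ‖G₀ ω‖ ≤ 1 := by
    filter_upwards [hG₀range] with ω h
    rw [Real.norm_eq_abs, abs_of_pos h.1]; linarith [h.2]
  have hGY : Integrable (fun ω => G ω * Y ω) ℙ :=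
    hY.bdd_mul hGm.aestronglyMeasurable (Filter.Eventually.of_forall hGnorm)
  have hYG : Integrable (fun ω => Y ω * G ω) ℙ :=
    hGY.congr (Filter.Eventually.of_forall fun ω => mul_comm _ _)
  have hG₀G : Integrable (fun ω => G₀ ω * G ω) ℙ :=
    hGint.bdd_mul hG₀m.aestronglyMeasurable hG₀bd
  have hGM₀ : Integrable (fun ω => G ω * M₀ ω) ℙ :=
    hMG.congr (Filter.Eventually.of_forall fun ω => mul_comm _ _)
  -- the log term is bounded measurable
  have hlogbd : ∀ ω, ‖Real.log (1 + Real.exp (G ω))‖ ≤ Real.log 2 + C := by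
    intro ω
    have h1 : (0:ℝ) ≤ Real.log (1 + Real.exp (G ω)) :=
      Real.log_nonneg (by linarith [Real.exp_pos (G ω)])
    have h2 : (1:ℝ) + Real.exp (G ω) ≤ 2 * Real.exp |G ω| := by
      have e1 := Real.exp_le_exp.mpr (le_abs_self (G ω))
      have e2 := Real.one_le_exp (abs_nonneg (G ω))
      nlinarith
    have h3 : Real.log (1 + Real.exp (G ω)) ≤ Real.log 2 + C := by
      calc Real.log (1 + Real.exp (G ω)) ≤ Real.log (2 * Real.exp |G ω|) :=
            Real.log_le_log (by positivity) h2
        _ = Real.log 2 + |G ω| := by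
            rw [Real.log_mul two_ne_zero (Real.exp_pos _).ne', Real.log_exp]
        _ ≤ Real.log 2 + C := by linarith [hC ω]
    rw [Real.norm_eq_abs, abs_of_nonneg h1]; exact h3
  have hlogint : Integrable (fun ω => Real.log (1 + Real.exp (G ω))) ℙ :=
    Integrable.mono' (integrable_const (Real.log 2 + C))
      ((measurable_const.add hGm.exp).log.aestronglyMeasurable)
      (Filter.Eventually.of_forall hlogbd)
  -- integrability of the entropy term
  have hent_bd : ∀ c : ℝ, 0 < c → c < 1 → |c * Real.log c| ≤ 1 := by
    intro c h0 h1
    have hlog : Real.log c < 0 := Real.log_neg h0 h1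
    have h2 : Real.log c⁻¹ ≤ c⁻¹ - 1 := Real.log_le_sub_one_of_pos (by positivity)
    rw [Real.log_inv] at h2
    have h3 : c * (-Real.log c) ≤ c * (c⁻¹ - 1) := mul_le_mul_of_nonneg_left h2 h0.le
    have h4 : c * (c⁻¹ - 1) = 1 - c := by field_simp
    rw [abs_of_nonpos (by nlinarith)]
    nlinarith
  have hRbd : ∀ᵐ ω ∂ℙ,
      ‖G₀ ω * Real.log (G₀ ω) + (1 - G₀ ω) * Real.log (1 - G₀ ω)‖ ≤ 2 := by
    filter_upwards [hG₀range] with ω h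
    have b1 := hent_bd (G₀ ω) h.1 h.2
    have b2 := hent_bd (1 - G₀ ω) (by linarith [h.2]) (by linarith [h.1])
    calc ‖G₀ ω * Real.log (G₀ ω) + (1 - G₀ ω) * Real.log (1 - G₀ ω)‖
        ≤ |G₀ ω * Real.log (G₀ ω)| + |(1 - G₀ ω) * Real.log (1 - G₀ ω)| := abs_add_le _ _
      _ ≤ 2 := by linarith
  have hRmeas : Measurable (fun ω =>
      G₀ ω * Real.log (G₀ ω) + (1 - G₀ ω) * Real.log (1 - G₀ ω)) :=
    (hG₀m.mul hG₀m.log).add ((measurable_const.sub hG₀m).mul (measurable_const.sub hG₀m).log)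
  have hRint : Integrable (fun ω =>
      G₀ ω * Real.log (G₀ ω) + (1 - G₀ ω) * Real.log (1 - G₀ ω)) ℙ :=
    Integrable.mono' (integrable_const 2) hRmeas.aestronglyMeasurable hRbd
  have hLint : Integrable (fun ω => G₀ ω * G ω - Real.log (1 + Real.exp (G ω))) ℙ :=
    hG₀G.sub hlogint
  -- Step 1: reduce E[Y·G] to E[G₀·G] via conditional expectation
  have hcondmul : ℙ[fun ω => G ω * Y ω | MeasurableSpace.comap (fun ω => (X ω, A ω)) inferInstance] =ᵐ[ℙ] fun ω => G ω * (ℙ[Y | MeasurableSpace.comap (fun ω => (X ω, A ω)) inferInstance]) ω := by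
    have := condExp_mul_of_stronglyMeasurable_left (μ := ℙ) (m := MeasurableSpace.comap (fun ω => (X ω, A ω)) inferInstance)
      hGmeas.stronglyMeasurable (f := G) (g := Y) hGY hY
    exact this
  have key1 : ∫ ω, Y ω * G ω ∂ℙ = ∫ ω, G₀ ω * G ω ∂ℙ := by
    have e0 : ∫ ω, Y ω * G ω ∂ℙ = ∫ ω, G ω * Y ω ∂ℙ :=
      integral_congr_ae (Filter.Eventually.of_forall fun ω => mul_comm _ _)
    have e1 : ∫ ω, G ω * Y ω ∂ℙ = ∫ ω, (ℙ[fun ω => G ω * Y ω | MeasurableSpace.comap (fun ω => (X ω, A ω)) inferInstance]) ω ∂ℙ :=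
      (integral_condExp hmle).symm
    have e2 : ∫ ω, (ℙ[fun ω => G ω * Y ω | MeasurableSpace.comap (fun ω => (X ω, A ω)) inferInstance]) ω ∂ℙ
        = ∫ ω, G ω * (M₀ ω + G₀ ω) ∂ℙ := by
      refine integral_congr_ae ?_
      filter_upwards [hcondmul, hcond] with ω h1 h2
      rw [h1, h2]
    have e3 : ∫ ω, G ω * (M₀ ω + G₀ ω) ∂ℙ
        = ∫ ω, G ω * M₀ ω ∂ℙ + ∫ ω, G ω * G₀ ω ∂ℙ := by
      rw [← integral_add hGM₀ (hG₀G.congr (Filter.Eventually.of_forall fun ω => mul_comm _ _))]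
      exact integral_congr_ae (Filter.Eventually.of_forall fun ω => by ring)
    have e4 : ∫ ω, G ω * M₀ ω ∂ℙ = 0 := by
      rw [← hMGzero]
      exact integral_congr_ae (Filter.Eventually.of_forall fun ω => mul_comm _ _)
    have e5 : ∫ ω, G ω * G₀ ω ∂ℙ = ∫ ω, G₀ ω * G ω ∂ℙ :=
      integral_congr_ae (Filter.Eventually.of_forall fun ω => mul_comm _ _)
    rw [e0, e1, e2, e3, e4, e5, zero_add]
  -- Step 2: LHS integral equals ∫ (G₀·G − log(1+exp G))
  have lhs_eq : ∫ ω, (Y ω * G ω - Real.log (1 + Real.exp (G ω))) ∂ℙ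
      = ∫ ω, (G₀ ω * G ω - Real.log (1 + Real.exp (G ω))) ∂ℙ := by
    rw [integral_sub hYG hlogint, integral_sub hG₀G hlogint, key1]
  -- Step 3: pointwise comparison
  have hD0 : ∀ᵐ ω ∂ℙ, 0 ≤
      (G₀ ω * Real.log (G₀ ω) + (1 - G₀ ω) * Real.log (1 - G₀ ω))
        - (G₀ ω * G ω - Real.log (1 + Real.exp (G ω))) := by
    filter_upwards [hG₀range] with ω h
    have := (logit_key h.1 h.2 (G ω)).1
    linarith
  have hDint : Integrable (fun ω =>
      (G₀ ω * Real.log (G₀ ω) + (1 - G₀ ω) * Real.log (1 - G₀ ω))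
        - (G₀ ω * G ω - Real.log (1 + Real.exp (G ω)))) ℙ := hRint.sub hLint
  have hDi : ∫ ω, ((G₀ ω * Real.log (G₀ ω) + (1 - G₀ ω) * Real.log (1 - G₀ ω))
        - (G₀ ω * G ω - Real.log (1 + Real.exp (G ω)))) ∂ℙ
      = ∫ ω, (G₀ ω * Real.log (G₀ ω) + (1 - G₀ ω) * Real.log (1 - G₀ ω)) ∂ℙ
        - ∫ ω, (G₀ ω * G ω - Real.log (1 + Real.exp (G ω))) ∂ℙ :=
    integral_sub hRint hLint
  have hineq : ∫ ω, (G₀ ω * G ω - Real.log (1 + Real.exp (G ω))) ∂ℙ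
      ≤ ∫ ω, (G₀ ω * Real.log (G₀ ω) + (1 - G₀ ω) * Real.log (1 - G₀ ω)) ∂ℙ := by
    have := integral_nonneg_of_ae hD0
    rw [hDi] at this
    linarith
  constructor
  · rw [lhs_eq]; exact hineq
  · rw [lhs_eq]
    constructor
    · intro heq
      have hz : ∫ ω, ((G₀ ω * Real.log (G₀ ω) + (1 - G₀ ω) * Real.log (1 - G₀ ω))
          - (G₀ ω * G ω - Real.log (1 + Real.exp (G ω)))) ∂ℙ = 0 := by
        rw [hDi, heq]; ring
      have hae := (integral_eq_zero_iff_of_nonneg_ae hD0 hDint).mp hz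
      filter_upwards [hae, hG₀range] with ω h1 h2
      have h3 : G₀ ω * G ω - Real.log (1 + Real.exp (G ω))
          = G₀ ω * Real.log (G₀ ω) + (1 - G₀ ω) * Real.log (1 - G₀ ω) := by
        have : ((0:Ω → ℝ)) ω = (0:ℝ) := rfl
        simp only [Pi.zero_apply] at h1
        linarith [h1]
      exact (logit_key h2.1 h2.2 (G ω)).2.mp h3
    · intro hae
      have heqae : (fun ω => G₀ ω * G ω - Real.log (1 + Real.exp (G ω)))
          =ᵐ[ℙ] fun ω => G₀ ω * Real.log (G₀ ω) + (1 - G₀ ω) * Real.log (1 - G₀ ω) := by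
        filter_upwards [hae, hG₀range] with ω h1 h2
        exact (logit_key h2.1 h2.2 (G ω)).2.mpr h1
      exact integral_congr_ae heqae
end

section
/- Let (Ω, F, ℙ) be a probability space, X : Ω → ℝ^p and A : Ω → ℝ random variables, with σ(X) and σ(X, A) the sub-σ-algebras generated by X and by the pair (X, A). Let Y : Ω → ℝ be integrable with E[Y | σ(X, A)] = M₀ + G₀ almost surely, where M₀ is σ(X)-measurable and integrable, and G₀ is σ(X, A)-measurable with G₀(ω) > 0 almost surely, G₀ integrable, and G₀·log(G₀) integrable. Let G : Ω → ℝ be bounded, σ(X, A)-measurable, with M₀·G integrable and E[M₀ · G] = 0. Then E[Y·G − exp(G)] ≤ E[G₀·log(G₀) − G₀], and equality holds if and only if G = log(G₀) almost surely. -/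
open MeasureTheory

lemma exp_key' {c t : ℝ} (hc : 0 < c) : Real.exp (t - Real.log c) * c = Real.exp t := by
  rw [Real.exp_sub, Real.exp_log hc]; field_simp

lemma ptwise {c t : ℝ} (hc : 0 < c) : c * t - Real.exp t ≤ c * Real.log c - c := by
  have h := mul_le_mul_of_nonneg_right (Real.add_one_le_exp (t - Real.log c)) hc.le
  rw [exp_key' hc] at h; nlinarith

lemma ptwise_strict {c t : ℝ} (hc : 0 < c) (h : t ≠ Real.log c) :
    c * t - Real.exp t < c * Real.log c - c := by
  have h1 := mul_lt_mul_of_pos_right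
    (Real.add_one_lt_exp (x := t - Real.log c) (by intro h'; exact h (by linarith))) hc
  rw [exp_key' hc] at h1; nlinarith

/-- Poisson instance of Proposition 1: if `E[Y | σ(X,A)] = M₀ + G₀` a.s. with `M₀` a
`σ(X)`-measurable integrable main effect and `G₀` a `σ(X,A)`-measurable component that is
positive a.s., integrable, and with `G₀·log G₀` integrable, then for any bounded
`σ(X,A)`-measurable candidate `G` with `E[M₀·G] = 0`,
`E[Y·G − exp G] ≤ E[G₀·log G₀ − G₀]`, with equality iff `G = log G₀` almost surely. -/
theorem stmt11 {Ω : Type*} [MeasurableSpace Ω] (ℙ : Measure Ω) [IsProbabilityMeasure ℙ]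
    {p : ℕ} (X : Ω → (Fin p → ℝ)) (A : Ω → ℝ)
    (hX : Measurable X) (hA : Measurable A)
    (Y M₀ G₀ : Ω → ℝ)
    (hY : Integrable Y ℙ)
    (hcond : ℙ[Y | MeasurableSpace.comap (fun ω => (X ω, A ω)) inferInstance]
      =ᵐ[ℙ] fun ω => M₀ ω + G₀ ω)
    (hM₀meas : Measurable[MeasurableSpace.comap X inferInstance] M₀)
    (hM₀ : Integrable M₀ ℙ)
    (hG₀meas : Measurable[MeasurableSpace.comap (fun ω => (X ω, A ω)) inferInstance] G₀)
    (hG₀pos : ∀ᵐ ω ∂ℙ, 0 < G₀ ω)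
    (hG₀int : Integrable G₀ ℙ)
    (hG₀logint : Integrable (fun ω => G₀ ω * Real.log (G₀ ω)) ℙ)
    (G : Ω → ℝ)
    (hGbdd : ∃ C, ∀ ω, |G ω| ≤ C)
    (hGmeas : Measurable[MeasurableSpace.comap (fun ω => (X ω, A ω)) inferInstance] G)
    (hMG : Integrable (fun ω => M₀ ω * G ω) ℙ)
    (hMGzero : ∫ ω, M₀ ω * G ω ∂ℙ = 0) :
    ∫ ω, (Y ω * G ω - Real.exp (G ω)) ∂ℙ ≤
      ∫ ω, (G₀ ω * Real.log (G₀ ω) - G₀ ω) ∂ℙ ∧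
    (∫ ω, (Y ω * G ω - Real.exp (G ω)) ∂ℙ =
        ∫ ω, (G₀ ω * Real.log (G₀ ω) - G₀ ω) ∂ℙ ↔
      G =ᵐ[ℙ] fun ω => Real.log (G₀ ω)) := by
  have hm : MeasurableSpace.comap (fun ω => (X ω, A ω)) inferInstance
      ≤ ‹MeasurableSpace Ω› := (hX.prodMk hA).comap_le
  have hGm : Measurable G := hGmeas.mono hm le_rfl
  obtain ⟨C, hC⟩ := hGbdd
  have hCnorm : ∀ ω, ‖G ω‖ ≤ C := by simpa [Real.norm_eq_abs] using hC
  -- integrabilities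
  have hYG : Integrable (fun ω => G ω * Y ω) ℙ :=
    hY.bdd_mul hGm.aestronglyMeasurable (Filter.Eventually.of_forall hCnorm)
  have hG0G : Integrable (fun ω => G ω * G₀ ω) ℙ :=
    hG₀int.bdd_mul hGm.aestronglyMeasurable (Filter.Eventually.of_forall hCnorm)
  have hexpG : Integrable (fun ω => Real.exp (G ω)) ℙ := by
    refine (integrable_const (Real.exp C)).mono'
      ((Real.measurable_exp.comp hGm).aestronglyMeasurable) ?_
    filter_upwards with ω
    rw [Real.norm_eq_abs, abs_of_pos (Real.exp_pos _)]
    exact Real.exp_le_exp.2 ((abs_le.1 (hC ω)).2)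
  -- E[Y G] = E[G₀ G]
  have hmul : ℙ[fun ω => G ω * Y ω | MeasurableSpace.comap (fun ω => (X ω, A ω)) inferInstance] =ᵐ[ℙ] fun ω => G ω * (ℙ[Y|MeasurableSpace.comap (fun ω => (X ω, A ω)) inferInstance]) ω :=
    condExp_stronglyMeasurable_mul_of_bound hm hGmeas.stronglyMeasurable hY C
      (Filter.Eventually.of_forall hCnorm)
  have hYGeq : ∫ ω, G ω * Y ω ∂ℙ = ∫ ω, G ω * G₀ ω ∂ℙ := by
    have h1 : ∫ ω, G ω * Y ω ∂ℙ = ∫ ω, (ℙ[fun ω => G ω * Y ω | MeasurableSpace.comap (fun ω => (X ω, A ω)) inferInstance]) ω ∂ℙ :=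
      (integral_condExp hm).symm
    have h2 : ∫ ω, (ℙ[fun ω => G ω * Y ω | MeasurableSpace.comap (fun ω => (X ω, A ω)) inferInstance]) ω ∂ℙ
        = ∫ ω, G ω * (M₀ ω + G₀ ω) ∂ℙ := by
      refine integral_congr_ae (hmul.trans ?_)
      filter_upwards [hcond] with ω hω
      rw [hω]
    have h3 : ∫ ω, G ω * (M₀ ω + G₀ ω) ∂ℙ = ∫ ω, G ω * G₀ ω ∂ℙ := by
      have : (fun ω => G ω * (M₀ ω + G₀ ω))
          = fun ω => M₀ ω * G ω + G ω * G₀ ω := by funext ω; ring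
      rw [this, integral_add hMG hG0G, hMGzero, zero_add]
    rw [h1, h2, h3]
  have key : ∫ ω, (Y ω * G ω - Real.exp (G ω)) ∂ℙ
      = ∫ ω, (G₀ ω * G ω - Real.exp (G ω)) ∂ℙ := by
    have e1 : (fun ω => Y ω * G ω - Real.exp (G ω))
        = fun ω => G ω * Y ω - Real.exp (G ω) := by funext ω; ring
    have e2 : (fun ω => G₀ ω * G ω - Real.exp (G ω))
        = fun ω => G ω * G₀ ω - Real.exp (G ω) := by funext ω; ring
    rw [e1, e2, integral_sub hYG hexpG, integral_sub hG0G hexpG, hYGeq]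
  -- nonnegative difference
  set F : Ω → ℝ := fun ω =>
    (G₀ ω * Real.log (G₀ ω) - G₀ ω) - (G₀ ω * G ω - Real.exp (G ω)) with hFdef
  have hG0G' : Integrable (fun ω => G₀ ω * G ω) ℙ := by
    have : (fun ω => G₀ ω * G ω) = fun ω => G ω * G₀ ω := by funext ω; ring
    rw [this]; exact hG0G
  have hFint : Integrable F ℙ := (hG₀logint.sub hG₀int).sub (hG0G'.sub hexpG)
  have hFnonneg : 0 ≤ᵐ[ℙ] F := by
    filter_upwards [hG₀pos] with ω hω
    have := ptwise (c := G₀ ω) (t := G ω) hω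
    simp only [F, Pi.zero_apply]; linarith
  have hintF : ∫ ω, F ω ∂ℙ
      = ∫ ω, (G₀ ω * Real.log (G₀ ω) - G₀ ω) ∂ℙ
        - ∫ ω, (G₀ ω * G ω - Real.exp (G ω)) ∂ℙ := by
    rw [hFdef]
    exact integral_sub (hG₀logint.sub hG₀int) (hG0G'.sub hexpG)
  have hle : ∫ ω, (G₀ ω * G ω - Real.exp (G ω)) ∂ℙ
      ≤ ∫ ω, (G₀ ω * Real.log (G₀ ω) - G₀ ω) ∂ℙ := by
    have h0 : 0 ≤ ∫ ω, F ω ∂ℙ := integral_nonneg_of_ae hFnonneg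
    linarith [hintF ▸ h0]
  constructor
  · rw [key]; exact hle
  · rw [key]
    constructor
    · intro heq
      have hF0 : ∫ ω, F ω ∂ℙ = 0 := by rw [hintF]; linarith
      have := (integral_eq_zero_iff_of_nonneg_ae hFnonneg hFint).mp hF0
      filter_upwards [this, hG₀pos] with ω hω hpos
      by_contra hne
      have := ptwise_strict (c := G₀ ω) (t := G ω) hpos hne
      simp only [F, Pi.zero_apply] at hω
      linarith
    · intro heq
      refine le_antisymm hle ?_
      have : ∫ ω, F ω ∂ℙ = 0 := by
        rw [integral_eq_zero_iff_of_nonneg_ae hFnonneg hFint]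
        filter_upwards [heq, hG₀pos] with ω hω hpos
        simp only [F, Pi.zero_apply, hω, Real.exp_log hpos]
        ring
      linarith [hintF ▸ this]
end
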